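/- Let M be a 3×3 real symmetric positive definite matrix and g: S² → ℝ a continuous function. Define F: ℝ³ → ℝ by F(x) = ∫_{S²} max(1 − α(x,ω)², 0) · g(ω) (Mω·ω)^{-1/2} dH²(ω), where α(x,ω) = (x·ω)(Mω·ω)^{-1/2}. Then F is continuously differentiable on ℝ³ and for every x ∈ ℝ³ and j ∈ {1,2,3}, ∂F/∂x_j (x) = −2 ∫_{S²} α(x,ω) · 1_{(−1,1)}(α(x,ω)) · ω_j g(ω) (Mω·ω)^{-1} dH²(ω). -/

import Mathlib

open MeasureTheory Metric Matrix
open scoped ENNReal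
open Set
open scoped NNReal Topology

set_option maxHeartbeats 1000000
set_option synthInstance.maxHeartbeats 200000

noncomputable section

abbrev E3 := EuclideanSpace ℝ (Fin 3)

/-- The anisotropic kernel `W(x) = |x|⁻¹ Ψ(x/|x|)` as a real-valued function. -/
def W (Ψ : E3 → ℝ) (x : E3) : ℝ := ‖x‖⁻¹ * Ψ (‖x‖⁻¹ • x)

open Classical in
/-- The kernel with the convention `W(0) = +∞`, with values in `ℝ≥0∞`. -/
def kern (Ψ : E3 → ℝ) (x : E3) : ℝ≥0∞ :=
  if x = 0 then ∞ else ENNReal.ofReal (W Ψ x)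

/-- The nonlocal energy `I(μ) = ∬ W(x-y) dμ(y) dμ(x) + ∫ |x|² dμ(x)`. -/
def energy (Ψ : E3 → ℝ) (μ : Measure E3) : ℝ≥0∞ :=
  (∫⁻ x, ∫⁻ y, kern Ψ (x - y) ∂μ ∂μ) + ∫⁻ x, ENNReal.ofReal (‖x‖ ^ 2) ∂μ

/-- Fourier transform with the convention `φ̂(ξ) = (2π)^{-3/2} ∫ φ(x) e^{-i ξ·x} dx`. -/
def ftransform (φ : E3 → ℂ) (ξ : E3) : ℂ :=
  ((((2 * Real.pi) ^ ((3:ℝ)/2))⁻¹ : ℝ) : ℂ) *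
    ∫ x : E3, φ x * Complex.exp (-((inner ℝ ξ x : ℝ) : ℂ) * Complex.I)

/-- The hypothesis that the Fourier transform of `W` is `h(ξ/|ξ|)|ξ|⁻²`, in the sense of
tempered distributions: `∫ W(x) φ̂(x) dx = ∫ h(ξ/|ξ|)|ξ|⁻² φ(ξ) dξ` for every Schwartz `φ`. -/
def FourierRep (Ψ h : E3 → ℝ) : Prop :=
  ∀ φ : SchwartzMap E3 ℂ,
    ∫ x : E3, (W Ψ x : ℂ) * ftransform (fun y => φ y) x
      = ∫ ξ : E3, ((h (‖ξ‖⁻¹ • ξ) : ℝ) : ℂ) * (((‖ξ‖ ^ 2)⁻¹ : ℝ) : ℂ) * φ ξ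

/-- Membership in `SO(3)`. -/
def IsSO3 (R : Matrix (Fin 3) (Fin 3) ℝ) : Prop := R * Rᵀ = 1 ∧ R.det = 1

/-- The solid ellipsoid `R D(a) B̄`. -/
def ellipsoid (a : Fin 3 → ℝ) (R : Matrix (Fin 3) (Fin 3) ℝ) : Set E3 :=
  (Matrix.toEuclideanLin (R * Matrix.diagonal a)) '' Metric.closedBall 0 1

/-- The ellipsoid law: normalised Lebesgue measure on the ellipsoid. -/
def ellipsoidLaw (a : Fin 3 → ℝ) (R : Matrix (Fin 3) (Fin 3) ℝ) : Measure E3 :=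
  (volume (ellipsoid a R))⁻¹ • volume.restrict (ellipsoid a R)

/-- The semi-ellipsoid law supported on the ellipse `R Ẽ₀(a₁,a₂)`: the pushforward under
`(x₁,x₂) ↦ R(x₁,x₂,0)` of the measure on `ℝ²` with density
`(3/(2π a₁ a₂))·√(1 − x₁²/a₁² − x₂²/a₂²)` (the density vanishes outside the ellipse). -/
def semiEllipsoidLaw (a₁ a₂ : ℝ) (R : Matrix (Fin 3) (Fin 3) ℝ) : Measure E3 :=
  Measure.map
    (fun p : ℝ × ℝ =>
      Matrix.toEuclideanLin R ((EuclideanSpace.equiv (Fin 3) ℝ).symm ![p.1, p.2, 0]))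
    ((volume : Measure (ℝ × ℝ)).withDensity fun p =>
      ENNReal.ofReal ((3 / (2 * Real.pi * a₁ * a₂)) *
        Real.sqrt (1 - p.1 ^ 2 / a₁ ^ 2 - p.2 ^ 2 / a₂ ^ 2)))

/-- The quadratic form `Mω·ω`. -/
def qf (M : Matrix (Fin 3) (Fin 3) ℝ) (ω : E3) : ℝ := inner ℝ (Matrix.toEuclideanLin M ω) ω

/-- `α(x,ω) = (x·ω)(Mω·ω)^{-1/2}`. -/
def alphaM (M : Matrix (Fin 3) (Fin 3) ℝ) (x ω : E3) : ℝ :=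
  (inner ℝ x ω : ℝ) / Real.sqrt (qf M ω)

/-- `F(x) = ∫_{S²} max(1 − α(x,ω)², 0) g(ω) (Mω·ω)^{-1/2} dH²(ω)`. -/
def Ffun (M : Matrix (Fin 3) (Fin 3) ℝ) (g : E3 → ℝ) (x : E3) : ℝ :=
  ∫ ω in Metric.sphere (0:E3) 1,
    max (1 - alphaM M x ω ^ 2) 0 * g ω * (Real.sqrt (qf M ω))⁻¹ ∂μH[2]

lemma hausdorff2_real_univ_null : μH[2] (univ : Set ℝ) = 0 := by
  have : (univ : Set ℝ) = ⋃ n : ℕ, Icc (-(n:ℝ)) n := by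
    ext x
    simp only [mem_univ, mem_iUnion, mem_Icc, true_iff]
    obtain ⟨n, hn⟩ := exists_nat_ge |x|
    exact ⟨n, by cases abs_le.1 hn; constructor <;> linarith⟩
  rw [this]
  refine measure_iUnion_null fun n => ?_
  rcases MeasureTheory.Measure.hausdorffMeasure_zero_or_top (by norm_num : (1:ℝ) < 2)
    (Icc (-(n:ℝ)) n) with h | h
  · exact h
  · exfalso
    rw [MeasureTheory.hausdorffMeasure_real] at h
    exact (measure_Icc_lt_top).ne h

lemma exists_lipschitzOnWith_of_contDiff {A B : Type*} [NormedAddCommGroup A]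
    [NormedSpace ℝ A] [NormedAddCommGroup B] [NormedSpace ℝ B] {f : A → B}
    (hf : ContDiff ℝ 1 f) {s : Set A} (hs : IsCompact s) (hc : Convex ℝ s) :
    ∃ K : ℝ≥0, LipschitzOnWith K f s := by
  obtain ⟨hdiff, hcont⟩ := contDiff_one_iff_fderiv.1 hf
  obtain ⟨C, hC⟩ := hs.exists_bound_of_continuousOn (hcont.norm.continuousOn)
  refine ⟨Real.toNNReal C, hc.lipschitzOnWith_of_nnnorm_fderiv_le
    (fun x _ => hdiff x) (fun x hx => ?_)⟩
  have h1 : ‖fderiv ℝ f x‖ ≤ C := by simpa using hC x hx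
  rw [← norm_toNNReal]
  exact Real.toNNReal_mono h1


lemma null_range_of_contDiff {f : ℝ → E3} (hf : ContDiff ℝ 1 f) :
    μH[2] (Set.range f) = 0 := by
  have hcov : Set.range f ⊆ ⋃ n : ℕ, f '' Icc (-(n:ℝ)) n := by
    rintro _ ⟨x, rfl⟩
    obtain ⟨n, hn⟩ := exists_nat_ge |x|
    have := abs_le.1 hn
    exact mem_iUnion.2 ⟨n, ⟨x, ⟨by linarith [this.1], this.2⟩, rfl⟩⟩
  refine measure_mono_null hcov (measure_iUnion_null fun n => ?_)
  obtain ⟨K, hK⟩ := exists_lipschitzOnWith_of_contDiff hf isCompact_Icc (convex_Icc _ _)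
  refine le_antisymm ?_ zero_le
  calc μH[2] (f '' Icc (-(n:ℝ)) n) ≤ (K : ℝ≥0∞) ^ (2:ℝ) * μH[2] (Icc (-(n:ℝ)) n) :=
        hK.hausdorffMeasure_image_le (by norm_num)
    _ = 0 := by
        rw [measure_mono_null (subset_univ _) hausdorff2_real_univ_null, mul_zero]

lemma exists_lipschitzOnWith_of_contDiff' {A B : Type*} [NormedAddCommGroup A]
    [NormedSpace ℝ A] [NormedAddCommGroup B] [NormedSpace ℝ B] {f : A → B}
    (hf : ContDiff ℝ 1 f) {s : Set A} (hs : IsCompact s) (hc : Convex ℝ s) :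
    ∃ K : ℝ≥0, LipschitzOnWith K f s := by
  obtain ⟨hdiff, hcont⟩ := contDiff_one_iff_fderiv.1 hf
  obtain ⟨C, hC⟩ := hs.exists_bound_of_continuousOn (hcont.norm.continuousOn)
  refine ⟨Real.toNNReal C, hc.lipschitzOnWith_of_nnnorm_fderiv_le
    (fun x _ => hdiff x) (fun x hx => ?_)⟩
  have h1 : ‖fderiv ℝ f x‖ ≤ C := by simpa using hC x hx
  rw [← norm_toNNReal]
  exact Real.toNNReal_mono h1

/-- spherical coordinates map -/
def sphMap (p : ℝ × ℝ) : E3 :=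
  (Real.cos p.1 * Real.cos p.2) • EuclideanSpace.single 0 1
    + (Real.cos p.1 * Real.sin p.2) • EuclideanSpace.single 1 1
    + (Real.sin p.1) • EuclideanSpace.single 2 1

lemma sphMap_apply (p : ℝ × ℝ) :
    sphMap p 0 = Real.cos p.1 * Real.cos p.2 ∧
    sphMap p 1 = Real.cos p.1 * Real.sin p.2 ∧
    sphMap p 2 = Real.sin p.1 := by
  refine ⟨?_, ?_, ?_⟩ <;>
    simp [sphMap, EuclideanSpace.single_apply, PiLp.add_apply, PiLp.smul_apply]

lemma contDiff_sphMap : ContDiff ℝ 1 sphMap := by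
  unfold sphMap
  have h1 : ContDiff ℝ 1 (fun p : ℝ × ℝ => Real.cos p.1 * Real.cos p.2) :=
    (Real.contDiff_cos.comp contDiff_fst).mul (Real.contDiff_cos.comp contDiff_snd)
  have h2 : ContDiff ℝ 1 (fun p : ℝ × ℝ => Real.cos p.1 * Real.sin p.2) :=
    (Real.contDiff_cos.comp contDiff_fst).mul (Real.contDiff_sin.comp contDiff_snd)
  have h3 : ContDiff ℝ 1 (fun p : ℝ × ℝ => Real.sin p.1) :=
    Real.contDiff_sin.comp contDiff_fst
  exact ((h1.smul contDiff_const).add (h2.smul contDiff_const)).add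
    (h3.smul contDiff_const)


lemma sphere_coords {ω : E3} (hω : ω ∈ Metric.sphere (0:E3) 1) :
    ω 0 ^ 2 + ω 1 ^ 2 + ω 2 ^ 2 = 1 := by
  have hnorm : ‖ω‖ = 1 := by simpa using hω
  have h := EuclideanSpace.norm_eq ω
  rw [hnorm] at h
  have h2 := congrArg (· ^ 2) h.symm
  simp only [one_pow] at h2
  rw [Real.sq_sqrt (by positivity)] at h2
  rw [Fin.sum_univ_three] at h2
  simpa [Real.norm_eq_abs, sq_abs] using h2

lemma sphere_subset_sphMap :
    Metric.sphere (0:E3) 1 ⊆ sphMap '' Metric.closedBall 0 4 := by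
  intro ω hω
  have hsum := sphere_coords hω
  have hω2 : ω 2 ∈ Set.Icc (-1:ℝ) 1 := by
    constructor <;> nlinarith [sq_nonneg (ω 0), sq_nonneg (ω 1)]
  set t := Real.arcsin (ω 2) with ht
  have hsin : Real.sin t = ω 2 := Real.sin_arcsin hω2.1 hω2.2
  have hcos : Real.cos t = Real.sqrt (ω 0 ^ 2 + ω 1 ^ 2) := by
    rw [ht, Real.cos_arcsin]
    congr 1
    nlinarith
  have htmem : |t| ≤ 4 := by
    have h1 := Real.arcsin_mem_Icc (ω 2)
    have := Real.pi_le_four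
    rw [abs_le]
    constructor
    · linarith [h1.1]
    · linarith [h1.2]
  by_cases hr : ω 0 ^ 2 + ω 1 ^ 2 = 0
  · have h0 : ω 0 = 0 := by nlinarith [sq_nonneg (ω 0), sq_nonneg (ω 1)]
    have h1 : ω 1 = 0 := by nlinarith [sq_nonneg (ω 0), sq_nonneg (ω 1)]
    refine ⟨(t, 0), ?_, ?_⟩
    · rw [Metric.mem_closedBall, dist_zero_right, Prod.norm_def]
      simp only [norm_zero, Real.norm_eq_abs]
      exact max_le htmem (by norm_num)
    · have happ := sphMap_apply (t, 0)
      have hc0 : Real.cos t = 0 := by rw [hcos, hr, Real.sqrt_zero]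
      ext i
      fin_cases i
      · show sphMap (t, 0) 0 = ω 0
        rw [happ.1]; simp [hc0, h0]
      · show sphMap (t, 0) 1 = ω 1
        rw [happ.2.1]; simp [hc0, h1]
      · show sphMap (t, 0) 2 = ω 2
        rw [happ.2.2]; exact hsin
  · have hrpos : 0 < ω 0 ^ 2 + ω 1 ^ 2 := lt_of_le_of_ne (by positivity) (Ne.symm hr)
    set z : ℂ := ⟨ω 0, ω 1⟩ with hz
    have habs : ‖z‖ = Real.sqrt (ω 0 ^ 2 + ω 1 ^ 2) := by
      rw [Complex.norm_def, Complex.normSq_mk]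
      ring_nf
    have hzne : z ≠ 0 := by
      intro h
      rw [h] at habs
      simp only [norm_zero] at habs
      exact hr (by nlinarith [Real.sq_sqrt hrpos.le, Real.sqrt_nonneg (ω 0 ^ 2 + ω 1 ^ 2)])
    set φ := Complex.arg z with hφ
    have hcφ : Real.cos φ = ω 0 / ‖z‖ := Complex.cos_arg hzne
    have hsφ : Real.sin φ = ω 1 / ‖z‖ := Complex.sin_arg z
    have hrabs : ‖z‖ ≠ 0 := by
      rw [habs]
      positivity
    refine ⟨(t, φ), ?_, ?_⟩
    · rw [Metric.mem_closedBall, dist_zero_right, Prod.norm_def]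
      simp only [Real.norm_eq_abs]
      exact max_le htmem (le_trans (Complex.abs_arg_le_pi z) Real.pi_le_four)
    · have happ := sphMap_apply (t, φ)
      ext i
      fin_cases i
      · show sphMap (t, φ) 0 = ω 0
        rw [happ.1, hcos, ← habs, hcφ]
        field_simp
      · show sphMap (t, φ) 1 = ω 1
        rw [happ.2.1, hcos, ← habs, hsφ]
        field_simp
      · show sphMap (t, φ) 2 = ω 2
        rw [happ.2.2]; exact hsin

lemma sphere_hausdorff_lt_top : μH[2] (Metric.sphere (0:E3) 1) < ⊤ := by
  obtain ⟨K, hK⟩ := exists_lipschitzOnWith_of_contDiff' contDiff_sphMap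
    (isCompact_closedBall (0 : ℝ × ℝ) 4) (convex_closedBall _ _)
  calc μH[2] (Metric.sphere (0:E3) 1) ≤ μH[2] (sphMap '' Metric.closedBall 0 4) :=
        measure_mono sphere_subset_sphMap
    _ ≤ (K : ℝ≥0∞) ^ (2:ℝ) * μH[2] (Metric.closedBall (0:ℝ×ℝ) 4) :=
        hK.hausdorffMeasure_image_le (by norm_num)
    _ < ⊤ := by
        rw [MeasureTheory.hausdorffMeasure_prod_real]
        exact ENNReal.mul_lt_top
          (ENNReal.rpow_lt_top_of_nonneg (by norm_num) ENNReal.coe_ne_top)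
          (isCompact_closedBall _ _).measure_lt_top

/-- indicator of (-1,1) -/
def ind1 (t : ℝ) : ℝ := Set.indicator (Set.Ioo (-1 : ℝ) 1) (fun _ => (1:ℝ)) t

lemma ind1_of_mem {t : ℝ} (h1 : -1 < t) (h2 : t < 1) : ind1 t = 1 :=
  Set.indicator_of_mem (Set.mem_Ioo.2 ⟨h1, h2⟩) _

lemma ind1_of_not_mem {t : ℝ} (h : 1 ≤ |t|) : ind1 t = 0 := by
  refine Set.indicator_of_notMem (fun hm => ?_) _
  rw [Set.mem_Ioo] at hm
  exact absurd (abs_lt.2 hm) (not_lt.2 h)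

lemma abs_mul_ind1_le (t : ℝ) : |t * ind1 t| ≤ 1 := by
  by_cases h : t ∈ Set.Ioo (-1:ℝ) 1
  · rw [ind1, Set.indicator_of_mem h, mul_one]
    rw [abs_le]
    exact ⟨h.1.le, h.2.le⟩
  · rw [ind1, Set.indicator_of_notMem h, mul_zero]
    norm_num

lemma hasDerivAt_phi {t : ℝ} (h1 : t ≠ 1) (h2 : t ≠ -1) :
    HasDerivAt (fun s : ℝ => max (1 - s ^ 2) 0) (-2 * t * ind1 t) t := by
  rcases lt_trichotomy (|t|) 1 with h | h | h
  · -- |t| < 1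
    obtain ⟨ha, hb⟩ := abs_lt.1 h
    have hev : (fun s : ℝ => 1 - s ^ 2) =ᶠ[𝓝 t] fun s => max (1 - s ^ 2) 0 := by
      have hopen : IsOpen {s : ℝ | |s| < 1} := isOpen_lt (continuous_abs) continuous_const
      filter_upwards [hopen.mem_nhds h] with s hs
      have : 0 ≤ 1 - s ^ 2 := by
        have := abs_lt.1 hs
        nlinarith [this.1, this.2]
      rw [max_eq_left this]
    have hd : HasDerivAt (fun s : ℝ => 1 - s ^ 2) (-2 * t * ind1 t) t := by
      rw [ind1_of_mem ha hb, mul_one]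
      have := (hasDerivAt_pow 2 t).const_sub 1
      exact this.congr_deriv (by norm_num)
    exact hd.congr_of_eventuallyEq hev.symm
  · exfalso
    rcases (abs_eq (by norm_num : (0:ℝ) ≤ 1)).1 h with h | h
    exacts [h1 h, h2 h]
  · -- 1 < |t|
    have hev : (fun _ : ℝ => (0:ℝ)) =ᶠ[𝓝 t] fun s => max (1 - s ^ 2) 0 := by
      have hopen : IsOpen {s : ℝ | 1 < |s|} := isOpen_lt continuous_const continuous_abs
      filter_upwards [hopen.mem_nhds h] with s hs
      have h1s : 1 < |s| * |s| := by nlinarith [abs_nonneg s]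
      have : 1 - s ^ 2 ≤ 0 := by nlinarith [sq_abs s]
      rw [max_eq_right this]
    have hd : HasDerivAt (fun _ : ℝ => (0:ℝ)) (-2 * t * ind1 t) t := by
      rw [ind1_of_not_mem h.le, mul_zero]
      exact hasDerivAt_const t 0
    exact hd.congr_of_eventuallyEq hev.symm

lemma phi_eq_min (u : ℝ) : max (1 - u ^ 2) 0 = 1 - (min |u| 1) ^ 2 := by
  rcases le_total (|u|) 1 with h | h
  · rw [min_eq_left h, sq_abs, max_eq_left]
    nlinarith [abs_nonneg u, sq_abs u, sq_nonneg u]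
  · rw [min_eq_right h, one_pow, max_eq_right]
    · ring
    · have h2 : 1 ≤ |u| * |u| := by nlinarith [abs_nonneg u]
      nlinarith [sq_abs u]

lemma phi_lipschitz (s t : ℝ) :
    |max (1 - s ^ 2) 0 - max (1 - t ^ 2) 0| ≤ 2 * |s - t| := by
  rw [phi_eq_min, phi_eq_min]
  set a := min |s| 1 with ha
  set b := min |t| 1 with hb
  have ha0 : 0 ≤ a := le_min (abs_nonneg _) zero_le_one
  have hb0 : 0 ≤ b := le_min (abs_nonneg _) zero_le_one
  have ha1 : a ≤ 1 := min_le_right _ _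
  have hb1 : b ≤ 1 := min_le_right _ _
  have hab : |a - b| ≤ |s - t| := by
    have h1 : |a - b| ≤ abs (|s| - |t|) := by
      have h := abs_min_sub_min_le_max (|s|) 1 (|t|) 1
      simpa [max_eq_left (abs_nonneg (|s| - |t|))] using h
    exact h1.trans (abs_abs_sub_abs_le_abs_sub s t)
  have : (1 - a ^ 2) - (1 - b ^ 2) = (b - a) * (b + a) := by ring
  rw [this, abs_mul]
  calc |b - a| * |b + a| ≤ |s - t| * 2 := by
        apply mul_le_mul
        · rw [abs_sub_comm] at hab; exact hab
        · rw [abs_of_nonneg (by linarith)]; linarith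
        · exact abs_nonneg _
        · exact abs_nonneg _
    _ = 2 * |s - t| := mul_comm _ _

lemma continuousAt_mul_ind1 {t : ℝ} (h1 : t ≠ 1) (h2 : t ≠ -1) :
    ContinuousAt (fun s : ℝ => s * ind1 s) t := by
  rcases lt_trichotomy (|t|) 1 with h | h | h
  · have hopen : IsOpen {s : ℝ | |s| < 1} := isOpen_lt (continuous_abs) continuous_const
    have hev : (fun s : ℝ => s * ind1 s) =ᶠ[𝓝 t] fun s => s := by
      filter_upwards [hopen.mem_nhds h] with s hs
      obtain ⟨ha, hb⟩ := abs_lt.1 hs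
      rw [ind1_of_mem ha hb, mul_one]
    exact (continuousAt_congr hev.symm).1 continuousAt_id
  · exfalso
    rcases (abs_eq (by norm_num : (0:ℝ) ≤ 1)).1 h with h | h
    exacts [h1 h, h2 h]
  · have hopen : IsOpen {s : ℝ | 1 < |s|} := isOpen_lt continuous_const continuous_abs
    have hev : (fun s : ℝ => s * ind1 s) =ᶠ[𝓝 t] fun _ => (0:ℝ) := by
      filter_upwards [hopen.mem_nhds h] with s hs
      rw [ind1_of_not_mem (le_of_lt hs), mul_zero]
    exact (continuousAt_congr hev).2 continuousAt_const

lemma exists_angle {u v : ℝ} (h : u ^ 2 + v ^ 2 = 1) :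
    ∃ θ : ℝ, Real.cos θ = u ∧ Real.sin θ = v := by
  set z : ℂ := ⟨u, v⟩ with hz
  have habs : ‖z‖ = 1 := by
    rw [Complex.norm_def, Complex.normSq_mk]
    rw [show u * u + v * v = 1 by nlinarith]
    exact Real.sqrt_one
  have hzne : z ≠ 0 := by
    intro h0
    rw [h0, norm_zero] at habs
    norm_num at habs
  exact ⟨Complex.arg z, by rw [Complex.cos_arg hzne, habs]; simp [hz],
    by rw [Complex.sin_arg, habs]; simp [hz]⟩

lemma quadform_sphere_null (b : OrthonormalBasis (Fin 3) ℝ E3) (lam : Fin 3 → ℝ)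
    (h1 : 0 < lam 1) (h2 : 0 < lam 2) :
    μH[2] {ω : E3 | ‖ω‖ = 1 ∧
      lam 0 * (inner ℝ ω (b 0) : ℝ) ^ 2 + lam 1 * (inner ℝ ω (b 1) : ℝ) ^ 2
        + lam 2 * (inner ℝ ω (b 2) : ℝ) ^ 2 = 0} = 0 := by
  -- basic facts for every member
  have mem_facts : ∀ ω : E3, ‖ω‖ = 1 →
      ((inner ℝ ω (b 0) : ℝ) ^ 2 + (inner ℝ ω (b 1) : ℝ) ^ 2 + (inner ℝ ω (b 2) : ℝ) ^ 2 = 1) ∧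
      ω = (inner ℝ ω (b 0) : ℝ) • b 0 + (inner ℝ ω (b 1) : ℝ) • b 1
          + (inner ℝ ω (b 2) : ℝ) • b 2 := by
    intro ω hω
    constructor
    · have h := b.sum_inner_mul_inner ω ω
      rw [Fin.sum_univ_three] at h
      have hself : (inner ℝ ω ω : ℝ) = 1 := by
        rw [real_inner_self_eq_norm_sq, hω, one_pow]
      rw [hself] at h
      rw [← h]
      rw [real_inner_comm (b 0) ω, real_inner_comm (b 1) ω, real_inner_comm (b 2) ω]
      ring
    · have h := b.sum_repr ω
      rw [Fin.sum_univ_three] at h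
      simp only [OrthonormalBasis.repr_apply_apply] at h
      rw [real_inner_comm (b 0) ω, real_inner_comm (b 1) ω, real_inner_comm (b 2) ω]
      exact h.symm
  rcases lt_trichotomy (lam 0) 0 with hlam0 | hlam0 | hlam0
  · -- main case : lam 0 < 0
    set a : ℝ := 1 - lam 1 / lam 0 with ha_def
    set c : ℝ := 1 - lam 2 / lam 0 with hc_def
    have ha : 1 < a := by
      have : lam 1 / lam 0 < 0 := div_neg_of_pos_of_neg h1 hlam0
      simp only [ha_def]; linarith
    have hc : 1 < c := by
      have : lam 2 / lam 0 < 0 := div_neg_of_pos_of_neg h2 hlam0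
      simp only [hc_def]; linarith
    have ha0 : (0:ℝ) < a := by linarith
    have hc0 : (0:ℝ) < c := by linarith
    set f : ℝ → ℝ := fun θ => 1 - Real.cos θ ^ 2 / a - Real.sin θ ^ 2 / c with hf_def
    have hfpos : ∀ θ, 0 < f θ := by
      intro θ
      have hmax : Real.cos θ ^ 2 / a + Real.sin θ ^ 2 / c ≤ max a⁻¹ c⁻¹ := by
        have e1 : Real.cos θ ^ 2 / a ≤ Real.cos θ ^ 2 * max a⁻¹ c⁻¹ := by
          rw [div_eq_mul_inv]
          exact mul_le_mul_of_nonneg_left (le_max_left _ _) (sq_nonneg _)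
        have e2 : Real.sin θ ^ 2 / c ≤ Real.sin θ ^ 2 * max a⁻¹ c⁻¹ := by
          rw [div_eq_mul_inv]
          exact mul_le_mul_of_nonneg_left (le_max_right _ _) (sq_nonneg _)
        calc Real.cos θ ^ 2 / a + Real.sin θ ^ 2 / c
            ≤ (Real.cos θ ^ 2 + Real.sin θ ^ 2) * max a⁻¹ c⁻¹ := by rw [add_mul]; linarith
          _ = max a⁻¹ c⁻¹ := by rw [Real.cos_sq_add_sin_sq, one_mul]
      have hmaxlt : max a⁻¹ c⁻¹ < 1 :=
        max_lt (inv_lt_one_of_one_lt₀ ha) (inv_lt_one_of_one_lt₀ hc)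
      simp only [hf_def]
      linarith
    have hγcd : ∀ s : ℝ, ContDiff ℝ 1 (fun θ : ℝ =>
        (s * Real.sqrt (f θ)) • b 0 + ((Real.sqrt a)⁻¹ * Real.cos θ) • b 1
          + ((Real.sqrt c)⁻¹ * Real.sin θ) • b 2) := by
      intro s
      have hf_cd : ContDiff ℝ 1 f := by
        simp only [hf_def]
        exact (contDiff_const.sub ((Real.contDiff_cos.pow 2).div_const a)).sub
          ((Real.contDiff_sin.pow 2).div_const c)
      have hsq : ContDiff ℝ 1 (fun θ => Real.sqrt (f θ)) := by
        rw [contDiff_iff_contDiffAt]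
        intro θ
        exact (Real.contDiffAt_sqrt (hfpos θ).ne').comp θ hf_cd.contDiffAt
      exact (((contDiff_const.mul hsq).smul contDiff_const).add
        ((contDiff_const.mul Real.contDiff_cos).smul contDiff_const)).add
        ((contDiff_const.mul Real.contDiff_sin).smul contDiff_const)
    refine measure_mono_null (fun ω hω => ?_)
      (measure_union_null (null_range_of_contDiff (hγcd 1)) (null_range_of_contDiff (hγcd (-1))))
    obtain ⟨hωn, hquad⟩ := hω
    obtain ⟨hsum, hrepr⟩ := mem_facts ω hωn
    set y0 : ℝ := inner ℝ ω (b 0)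
    set y1 : ℝ := inner ℝ ω (b 1)
    set y2 : ℝ := inner ℝ ω (b 2)
    have key : a * y1 ^ 2 + c * y2 ^ 2 = 1 := by
      have hl0 : lam 0 ≠ 0 := hlam0.ne
      rw [ha_def, hc_def]
      have e1 : lam 1 * y1 ^ 2 + lam 2 * y2 ^ 2 = -(lam 0 * y0 ^ 2) := by linarith
      have e2 : lam 0 * y0 ^ 2 / lam 0 = y0 ^ 2 := by field_simp
      calc (1 - lam 1 / lam 0) * y1 ^ 2 + (1 - lam 2 / lam 0) * y2 ^ 2
          = y1 ^ 2 + y2 ^ 2 - (lam 1 * y1 ^ 2 + lam 2 * y2 ^ 2) / lam 0 := by ring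
        _ = 1 := by rw [e1, neg_div, e2]; linarith
    have hcirc : (Real.sqrt a * y1) ^ 2 + (Real.sqrt c * y2) ^ 2 = 1 := by
      rw [mul_pow, mul_pow, Real.sq_sqrt ha0.le, Real.sq_sqrt hc0.le]
      exact key
    obtain ⟨θ, hcosθ, hsinθ⟩ := exists_angle hcirc
    have hane : Real.sqrt a ≠ 0 := (Real.sqrt_pos.2 ha0).ne'
    have hcne : Real.sqrt c ≠ 0 := (Real.sqrt_pos.2 hc0).ne'
    have hy1 : y1 = (Real.sqrt a)⁻¹ * Real.cos θ := by
      rw [hcosθ]; field_simp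
    have hy2 : y2 = (Real.sqrt c)⁻¹ * Real.sin θ := by
      rw [hsinθ]; field_simp
    have hfθ : f θ = y0 ^ 2 := by
      simp only [hf_def]
      rw [hcosθ, hsinθ]
      have e1 : (Real.sqrt a * y1) ^ 2 / a = y1 ^ 2 := by
        rw [mul_pow, Real.sq_sqrt ha0.le]; field_simp
      have e2 : (Real.sqrt c * y2) ^ 2 / c = y2 ^ 2 := by
        rw [mul_pow, Real.sq_sqrt hc0.le]; field_simp
      rw [e1, e2]; linarith
    rcases le_or_gt 0 y0 with hy0 | hy0
    · left
      refine ⟨θ, ?_⟩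
      have hs : Real.sqrt (f θ) = y0 := by
        rw [hfθ, Real.sqrt_sq hy0]
      show (1 * Real.sqrt (f θ)) • b 0 + ((Real.sqrt a)⁻¹ * Real.cos θ) • b 1
          + ((Real.sqrt c)⁻¹ * Real.sin θ) • b 2 = ω
      rw [hs, one_mul, ← hy1, ← hy2]
      exact hrepr.symm
    · right
      refine ⟨θ, ?_⟩
      have hs : Real.sqrt (f θ) = -y0 := by
        rw [hfθ, Real.sqrt_sq_eq_abs, abs_of_neg hy0]
      show (-1 * Real.sqrt (f θ)) • b 0 + ((Real.sqrt a)⁻¹ * Real.cos θ) • b 1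
          + ((Real.sqrt c)⁻¹ * Real.sin θ) • b 2 = ω
      rw [hs, neg_one_mul, neg_neg, ← hy1, ← hy2]
      exact hrepr.symm
  · -- lam 0 = 0
    have hincl : {ω : E3 | ‖ω‖ = 1 ∧
        lam 0 * (inner ℝ ω (b 0) : ℝ) ^ 2 + lam 1 * (inner ℝ ω (b 1) : ℝ) ^ 2
          + lam 2 * (inner ℝ ω (b 2) : ℝ) ^ 2 = 0}
        ⊆ Set.range (fun s : ℝ => (1 - 2 * s) • b 0) := by
      rintro ω ⟨hωn, hquad⟩
      obtain ⟨hsum, hrepr⟩ := mem_facts ω hωn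
      set y0 : ℝ := inner ℝ ω (b 0)
      set y1 : ℝ := inner ℝ ω (b 1)
      set y2 : ℝ := inner ℝ ω (b 2)
      rw [hlam0, zero_mul, zero_add] at hquad
      have e1 : lam 1 * y1 ^ 2 = 0 := le_antisymm
        (by nlinarith [mul_nonneg h2.le (sq_nonneg y2)])
        (mul_nonneg h1.le (sq_nonneg y1))
      have e2 : lam 2 * y2 ^ 2 = 0 := le_antisymm
        (by nlinarith [mul_nonneg h1.le (sq_nonneg y1)])
        (mul_nonneg h2.le (sq_nonneg y2))
      have hy1 : y1 = 0 := by
        have := (mul_eq_zero.1 e1).resolve_left h1.ne'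
        exact pow_eq_zero_iff (two_ne_zero) |>.1 this
      have hy2 : y2 = 0 := by
        have := (mul_eq_zero.1 e2).resolve_left h2.ne'
        exact pow_eq_zero_iff (two_ne_zero) |>.1 this
      have hy0 : y0 = 1 ∨ y0 = -1 := by
        have hsq : y0 ^ 2 = 1 := by rw [hy1, hy2] at hsum; linarith
        have hfac : (y0 - 1) * (y0 + 1) = 0 := by linear_combination hsq
        rcases mul_eq_zero.1 hfac with h | h
        · exact Or.inl (by linarith)
        · exact Or.inr (by linarith)
      rcases hy0 with hy0 | hy0
      · exact ⟨0, by rw [hrepr, hy0, hy1, hy2]; simp⟩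
      · exact ⟨1, by rw [hrepr, hy0, hy1, hy2]; norm_num⟩
    refine measure_mono_null hincl (null_range_of_contDiff ?_)
    exact (contDiff_const.sub (contDiff_const.mul contDiff_id)).smul contDiff_const
  · -- lam 0 > 0 : empty set
    have hempty : {ω : E3 | ‖ω‖ = 1 ∧
        lam 0 * (inner ℝ ω (b 0) : ℝ) ^ 2 + lam 1 * (inner ℝ ω (b 1) : ℝ) ^ 2
          + lam 2 * (inner ℝ ω (b 2) : ℝ) ^ 2 = 0} = ∅ := by
      rw [eq_empty_iff_forall_notMem]
      rintro ω ⟨hωn, hquad⟩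
      obtain ⟨hsum, -⟩ := mem_facts ω hωn
      set y0 : ℝ := inner ℝ ω (b 0)
      set y1 : ℝ := inner ℝ ω (b 1)
      set y2 : ℝ := inner ℝ ω (b 2)
      have e0 : lam 0 * y0 ^ 2 = 0 := le_antisymm
        (by nlinarith [mul_nonneg h1.le (sq_nonneg y1), mul_nonneg h2.le (sq_nonneg y2)])
        (mul_nonneg hlam0.le (sq_nonneg y0))
      have e1 : lam 1 * y1 ^ 2 = 0 := le_antisymm
        (by nlinarith [mul_nonneg hlam0.le (sq_nonneg y0), mul_nonneg h2.le (sq_nonneg y2)])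
        (mul_nonneg h1.le (sq_nonneg y1))
      have e2 : lam 2 * y2 ^ 2 = 0 := le_antisymm
        (by nlinarith [mul_nonneg hlam0.le (sq_nonneg y0), mul_nonneg h1.le (sq_nonneg y1)])
        (mul_nonneg h2.le (sq_nonneg y2))
      have z0 : y0 ^ 2 = 0 := (mul_eq_zero.1 e0).resolve_left hlam0.ne'
      have z1 : y1 ^ 2 = 0 := (mul_eq_zero.1 e1).resolve_left h1.ne'
      have z2 : y2 ^ 2 = 0 := (mul_eq_zero.1 e2).resolve_left h2.ne'
      rw [z0, z1, z2] at hsum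
      norm_num at hsum
    rw [hempty]
    exact measure_empty

lemma inner_toEuclideanLin (M : Matrix (Fin 3) (Fin 3) ℝ) (u v : E3) :
    (inner ℝ (Matrix.toEuclideanLin M u) v : ℝ)
      = (M *ᵥ (WithLp.equiv 2 _ u)) ⬝ᵥ (WithLp.equiv 2 _ v) := by
  simp [PiLp.inner_apply, RCLike.inner_apply, Matrix.toEuclideanLin_apply, dotProduct,
    mul_comm]

lemma transpose_eq_of_posDef {M : Matrix (Fin 3) (Fin 3) ℝ} (hM : M.PosDef) : Mᵀ = M := by
  have := hM.1
  simpa [Matrix.IsHermitian, Matrix.conjTranspose_eq_transpose_of_trivial] using this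

lemma toEuclideanLin_symm {M : Matrix (Fin 3) (Fin 3) ℝ} (hM : M.PosDef) (u v : E3) :
    (inner ℝ (Matrix.toEuclideanLin M u) v : ℝ) = inner ℝ u (Matrix.toEuclideanLin M v) := by
  rw [inner_toEuclideanLin, real_inner_comm, inner_toEuclideanLin]
  rw [dotProduct_comm, Matrix.dotProduct_mulVec, ← transpose_eq_of_posDef hM,
    Matrix.vecMul_transpose, transpose_eq_of_posDef hM]

lemma qf_pos {M : Matrix (Fin 3) (Fin 3) ℝ} (hM : M.PosDef) {ω : E3} (hω : ω ≠ 0) :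
    0 < qf M ω := by
  have h := hM.dotProduct_mulVec_pos (x := WithLp.equiv 2 _ ω) (by
    intro h
    apply hω
    exact (WithLp.equiv 2 _).injective (by simpa using h))
  rw [qf, inner_toEuclideanLin, dotProduct_comm]
  simpa using h

lemma badset_null (M : Matrix (Fin 3) (Fin 3) ℝ) (hM : M.PosDef) (x : E3) :
    μH[2] {ω : E3 | ‖ω‖ = 1 ∧ (inner ℝ x ω : ℝ) ^ 2 = qf M ω} = 0 := by
  classical
  set T : E3 →ₗ[ℝ] E3 :=
    (Matrix.toEuclideanLin M : E3 →ₗ[ℝ] E3)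
      - (LinearMap.smulRight ((innerSL ℝ x : E3 →L[ℝ] ℝ) : E3 →ₗ[ℝ] ℝ) x) with hT_def
  have hT_apply : ∀ ω : E3, T ω = Matrix.toEuclideanLin M ω - (inner ℝ x ω : ℝ) • x := by
    intro ω; simp [hT_def]
  have hTsym : T.IsSymmetric := by
    intro u v
    rw [hT_apply, hT_apply, inner_sub_left, inner_sub_right]
    rw [toEuclideanLin_symm hM]
    congr 1
    rw [real_inner_smul_left, real_inner_smul_right, real_inner_comm x u]
    ring
  have hTquad : ∀ ω : E3, (inner ℝ (T ω) ω : ℝ) = qf M ω - (inner ℝ x ω : ℝ) ^ 2 := by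
    intro ω
    rw [hT_apply, inner_sub_left, real_inner_smul_left,
      show qf M ω = (inner ℝ (Matrix.toEuclideanLin M ω) ω : ℝ) from rfl]
    ring
  have hperp : ∀ w : E3, w ≠ 0 → (inner ℝ x w : ℝ) = 0 → 0 < (inner ℝ (T w) w : ℝ) := by
    intro w hw hxw
    rw [hTquad, hxw]
    simpa using qf_pos hM hw
  have h3 : Module.finrank ℝ E3 = 3 := finrank_euclideanSpace_fin
  set b := hTsym.eigenvectorBasis h3 with hb
  set lam := hTsym.eigenvalues h3 with hlam
  have heig : ∀ i, T (b i) = lam i • b i := by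
    intro i
    have h := hTsym.apply_eigenvectorBasis h3 i
    rw [hb, hlam]
    exact_mod_cast h
  have hbne : ∀ i, b i ≠ 0 := fun i => by simpa using b.toBasis.ne_zero i
  have hON : ∀ i j, (inner ℝ (b i) (b j) : ℝ) = if i = j then 1 else 0 :=
    orthonormal_iff_ite.mp b.orthonormal
  have claim : ∀ i j : Fin 3, i ≠ j → 0 < lam i ∨ 0 < lam j := by
    intro i j hij
    by_contra hcon
    push_neg at hcon
    obtain ⟨hi, hj⟩ := hcon
    by_cases hz : (inner ℝ x (b i) : ℝ) = 0
    · have hpos := hperp (b i) (hbne i) hz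
      rw [heig i, real_inner_smul_left] at hpos
      have h1 : (inner ℝ (b i) (b i) : ℝ) = 1 := by simpa using hON i i
      rw [h1, mul_one] at hpos
      linarith
    · set ci : ℝ := inner ℝ x (b j) with hci
      set cj : ℝ := inner ℝ x (b i) with hcj
      set w : E3 := ci • b i - cj • b j with hw
      have hxw : (inner ℝ x w : ℝ) = 0 := by
        rw [hw, inner_sub_right, real_inner_smul_right, real_inner_smul_right]
        ring
      have hwi : (inner ℝ w (b i) : ℝ) = ci := by
        rw [hw, inner_sub_left, real_inner_smul_left, real_inner_smul_left,
          hON i i, hON j i, if_pos rfl, if_neg (Ne.symm hij)]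
        ring
      have hwj : (inner ℝ w (b j) : ℝ) = -cj := by
        rw [hw, inner_sub_left, real_inner_smul_left, real_inner_smul_left,
          hON i j, hON j j, if_pos rfl, if_neg hij]
        ring
      have hwne : w ≠ 0 := by
        intro h0
        apply hz
        rw [h0] at hwj
        simp only [inner_zero_left] at hwj
        rw [hcj] at hwj
        linarith
      have hq : (inner ℝ (T w) w : ℝ) = lam i * ci ^ 2 + lam j * cj ^ 2 := by
        have hTw : T w = (ci * lam i) • b i - (cj * lam j) • b j := by
          rw [hw, map_sub, LinearMap.map_smul, LinearMap.map_smul, heig i, heig j, smul_smul, smul_smul]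
        rw [hTw, inner_sub_left, real_inner_smul_left, real_inner_smul_left, hw,
          inner_sub_right, inner_sub_right, real_inner_smul_right, real_inner_smul_right,
          real_inner_smul_right, real_inner_smul_right,
          hON i i, hON i j, hON j i, hON j j, if_pos rfl, if_pos rfl,
          if_neg hij, if_neg (Ne.symm hij)]
        ring
      have hpos := hperp w hwne hxw
      rw [hq] at hpos
      nlinarith [sq_nonneg ci, sq_nonneg cj,
        mul_nonpos_of_nonpos_of_nonneg hi (sq_nonneg ci),
        mul_nonpos_of_nonpos_of_nonneg hj (sq_nonneg cj)]
  have key : ∀ σ : Equiv.Perm (Fin 3), 0 < lam (σ 1) → 0 < lam (σ 2) →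
      μH[2] {ω : E3 | ‖ω‖ = 1 ∧ (inner ℝ x ω : ℝ) ^ 2 = qf M ω} = 0 := by
    intro σ hp1 hp2
    set b' := b.reindex σ.symm with hb'def
    have hb' : ∀ i, b' i = b (σ i) := by
      intro i
      rw [hb'def, OrthonormalBasis.reindex_apply, Equiv.symm_symm]
    refine measure_mono_null ?_
      (quadform_sphere_null b' (fun i => lam (σ i)) hp1 hp2)
    rintro ω ⟨hωn, hωq⟩
    refine ⟨hωn, ?_⟩
    have hTzero : (inner ℝ (T ω) ω : ℝ) = 0 := by
      rw [hTquad ω, hωq]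
      ring
    have hexp := b'.sum_inner_mul_inner (T ω) ω
    rw [Fin.sum_univ_three] at hexp
    have hterm : ∀ i, (inner ℝ (T ω) (b' i) : ℝ) * (inner ℝ (b' i) ω : ℝ)
        = lam (σ i) * (inner ℝ ω (b' i) : ℝ) ^ 2 := by
      intro i
      have h1 : (inner ℝ (T ω) (b' i) : ℝ) = (inner ℝ ω (T (b' i)) : ℝ) := hTsym ω (b' i)
      have h2 : T (b' i) = lam (σ i) • b' i := by rw [hb' i, heig (σ i), ← hb' i]
      rw [h1, h2, real_inner_smul_right, real_inner_comm (b' i) ω]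
      ring
    rw [hterm 0, hterm 1, hterm 2, hTzero] at hexp
    exact hexp
  by_cases p1 : 0 < lam 1
  · by_cases p2 : 0 < lam 2
    · exact key (Equiv.refl _) p1 p2
    · have p0 : 0 < lam 0 := ((claim 2 0 (by decide)).resolve_left p2)
      have e1 : (Equiv.swap (0:Fin 3) 2) 1 = 1 :=
        Equiv.swap_apply_of_ne_of_ne (by decide) (by decide)
      have e2 : (Equiv.swap (0:Fin 3) 2) 2 = 0 := Equiv.swap_apply_right 0 2
      exact key (Equiv.swap 0 2) (by rw [e1]; exact p1) (by rw [e2]; exact p0)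
  · have p0 : 0 < lam 0 := ((claim 1 0 (by decide)).resolve_left p1)
    have p2 : 0 < lam 2 := ((claim 1 2 (by decide)).resolve_left p1)
    have e1 : (Equiv.swap (0:Fin 3) 1) 1 = 0 := Equiv.swap_apply_right 0 1
    have e2 : (Equiv.swap (0:Fin 3) 1) 2 = 2 :=
      Equiv.swap_apply_of_ne_of_ne (by decide) (by decide)
    exact key (Equiv.swap 0 1) (by rw [e1]; exact p0) (by rw [e2]; exact p2)

/-- integrand of `Ffun` -/
def Fint (M : Matrix (Fin 3) (Fin 3) ℝ) (g : E3 → ℝ) (x ω : E3) : ℝ :=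
  max (1 - alphaM M x ω ^ 2) 0 * g ω * (Real.sqrt (qf M ω))⁻¹

/-- coefficient of the derivative -/
def coefD (M : Matrix (Fin 3) (Fin 3) ℝ) (g : E3 → ℝ) (x ω : E3) : ℝ :=
  -2 * (alphaM M x ω * ind1 (alphaM M x ω)) * (g ω * (qf M ω)⁻¹)

/-- the pointwise derivative -/
def FD (M : Matrix (Fin 3) (Fin 3) ℝ) (g : E3 → ℝ) (x ω : E3) : E3 →L[ℝ] ℝ :=
  coefD M g x ω • (innerSL ℝ ω)


/-- `F` is continuously differentiable, with partial derivatives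
`∂F/∂x_j(x) = −2 ∫_{S²} α(x,ω) 1_{(−1,1)}(α(x,ω)) ω_j g(ω) (Mω·ω)⁻¹ dH²(ω)`. -/
theorem Ffun_contDiff_and_fderiv
    (M : Matrix (Fin 3) (Fin 3) ℝ) (hM : M.PosDef)
    (g : E3 → ℝ) (hg : ContinuousOn g (Metric.sphere (0:E3) 1)) :
    ContDiff ℝ 1 (Ffun M g) ∧
    ∀ (x : E3) (j : Fin 3),
      fderiv ℝ (Ffun M g) x (EuclideanSpace.single j 1)
        = -2 * ∫ ω in Metric.sphere (0:E3) 1,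
            alphaM M x ω *
              Set.indicator (Set.Ioo (-1 : ℝ) 1) (fun _ => (1:ℝ)) (alphaM M x ω) *
              ω j * g ω * (qf M ω)⁻¹ ∂μH[2] := by
  have hsph_meas : MeasurableSet (Metric.sphere (0:E3) 1) := (isClosed_sphere).measurableSet
  set μ : Measure E3 := μH[2].restrict (Metric.sphere (0:E3) 1) with hμ
  haveI : IsFiniteMeasure μ :=
    ⟨by rw [hμ, Measure.restrict_apply_univ]; exact sphere_hausdorff_lt_top⟩
  -- continuity of qf
  have hq_cont : Continuous (qf M) :=
    Continuous.inner (Matrix.toEuclideanLin M).continuous_of_finiteDimensional continuous_id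
  -- minimum of qf on the sphere
  have hsph_ne : (Metric.sphere (0:E3) 1).Nonempty :=
    NormedSpace.sphere_nonempty.2 (by norm_num)
  obtain ⟨ωm, hωm, hmin⟩ :=
    (isCompact_sphere (0:E3) 1).exists_isMinOn hsph_ne hq_cont.continuousOn
  set m : ℝ := qf M ωm with hm_def
  have hm_pos : 0 < m := by
    apply qf_pos hM
    intro h0
    rw [mem_sphere_zero_iff_norm] at hωm
    rw [h0] at hωm
    simp at hωm
  have hq_ge : ∀ ω ∈ Metric.sphere (0:E3) 1, m ≤ qf M ω := fun ω hω => hmin hω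
  have hq_pos : ∀ ω ∈ Metric.sphere (0:E3) 1, 0 < qf M ω :=
    fun ω hω => lt_of_lt_of_le hm_pos (hq_ge ω hω)
  -- bound for g
  obtain ⟨B, hB⟩ := (isCompact_sphere (0:E3) 1).exists_bound_of_continuousOn hg
  have hB0 : 0 ≤ B := le_trans (norm_nonneg _) (hB ωm hωm)
  -- measurability
  have hα_meas : ∀ x : E3, Measurable fun ω => alphaM M x ω := by
    intro x
    exact ((Continuous.inner continuous_const continuous_id).measurable).div
      ((Real.continuous_sqrt.comp hq_cont).measurable)
  have hg_ae : AEMeasurable g μ := (hg.aemeasurable hsph_meas)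
  have hind_meas : Measurable ind1 := measurable_const.indicator measurableSet_Ioo
  have hFint_meas : ∀ x, AEStronglyMeasurable (Fint M g x) μ := by
    intro x
    apply AEMeasurable.aestronglyMeasurable
    refine (AEMeasurable.mul ?_ hg_ae).mul ?_
    · exact ((((hα_meas x).pow_const 2).const_sub 1).max measurable_const).aemeasurable
    · exact ((Real.continuous_sqrt.comp hq_cont).measurable.inv).aemeasurable
  have hcoef_meas : ∀ x, AEMeasurable (coefD M g x) μ := by
    intro x
    refine (AEMeasurable.mul ?_ (hg_ae.mul (hq_cont.measurable.inv).aemeasurable))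
    exact (measurable_const.mul ((hα_meas x).mul (hind_meas.comp (hα_meas x)))).aemeasurable
  have hFD_meas : ∀ x, AEStronglyMeasurable (FD M g x) μ := by
    intro x
    exact AEStronglyMeasurable.smul (hcoef_meas x).aestronglyMeasurable
      ((innerSL ℝ (E := E3)).continuous.aestronglyMeasurable)
  -- bounds
  have hsqrt_inv_le : ∀ ω ∈ Metric.sphere (0:E3) 1,
      (Real.sqrt (qf M ω))⁻¹ ≤ (Real.sqrt m)⁻¹ := by
    intro ω hω
    have h1 : Real.sqrt m ≤ Real.sqrt (qf M ω) := Real.sqrt_le_sqrt (hq_ge ω hω)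
    exact inv_anti₀ (Real.sqrt_pos.2 hm_pos) h1
  have hphi_bd : ∀ t : ℝ, |max (1 - t ^ 2) 0| ≤ 1 := by
    intro t
    rw [abs_le]
    constructor
    · have := le_max_right (1 - t ^ 2) 0; linarith
    · apply max_le (by nlinarith [sq_nonneg t]) (by norm_num)
  have hFint_bd : ∀ x, ∀ ω ∈ Metric.sphere (0:E3) 1,
      ‖Fint M g x ω‖ ≤ B * (Real.sqrt m)⁻¹ := by
    intro x ω hω
    rw [Real.norm_eq_abs, Fint, abs_mul, abs_mul]
    have h1 := hphi_bd (alphaM M x ω)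
    have h2 := hB ω hω
    rw [Real.norm_eq_abs] at h2
    have h3 : |(Real.sqrt (qf M ω))⁻¹| ≤ (Real.sqrt m)⁻¹ := by
      rw [abs_of_nonneg (by positivity)]
      exact hsqrt_inv_le ω hω
    calc |max (1 - alphaM M x ω ^ 2) 0| * |g ω| * |(Real.sqrt (qf M ω))⁻¹|
        ≤ 1 * B * (Real.sqrt m)⁻¹ := by
          apply mul_le_mul (mul_le_mul h1 h2 (abs_nonneg _) (by norm_num)) h3 (abs_nonneg _)
          positivity
      _ = B * (Real.sqrt m)⁻¹ := by ring
  have hFint_int : ∀ x, Integrable (Fint M g x) μ := by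
    intro x
    refine Integrable.mono' (integrable_const (B * (Real.sqrt m)⁻¹)) (hFint_meas x) ?_
    rw [hμ]
    filter_upwards [ae_restrict_mem hsph_meas] with ω hω
    exact hFint_bd x ω hω
  -- Lipschitz estimate
  have hlip : ∀ x₀ : E3, ∀ᵐ ω ∂μ, LipschitzOnWith (Real.nnabs (2 * B / m))
      (fun x => Fint M g x ω) (Metric.ball x₀ 1) := by
    intro x₀
    rw [hμ]
    filter_upwards [ae_restrict_mem hsph_meas] with ω hω
    rw [lipschitzOnWith_iff_dist_le_mul]
    intro x _ y _
    have hq := hq_pos ω hω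
    have hsq : 0 < Real.sqrt (qf M ω) := Real.sqrt_pos.2 hq
    have hωn : ‖ω‖ = 1 := mem_sphere_zero_iff_norm.1 hω
    have hinv : (Real.sqrt (qf M ω))⁻¹ * (Real.sqrt (qf M ω))⁻¹ = (qf M ω)⁻¹ := by
      rw [← mul_inv, Real.mul_self_sqrt hq.le]
    have hαd : |alphaM M x ω - alphaM M y ω| ≤ ‖x - y‖ * (Real.sqrt (qf M ω))⁻¹ := by
      have h1 : alphaM M x ω - alphaM M y ω
          = (inner ℝ (x - y) ω : ℝ) * (Real.sqrt (qf M ω))⁻¹ := by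
        rw [inner_sub_left]
        simp only [alphaM]
        field_simp
      rw [h1, abs_mul, abs_of_nonneg (inv_nonneg.2 hsq.le)]
      apply mul_le_mul_of_nonneg_right _ (inv_nonneg.2 hsq.le)
      calc |(inner ℝ (x - y) ω : ℝ)| ≤ ‖x - y‖ * ‖ω‖ := abs_real_inner_le_norm _ _
        _ = ‖x - y‖ := by rw [hωn, mul_one]
    have hgb := hB ω hω
    rw [Real.norm_eq_abs] at hgb
    rw [Real.dist_eq, dist_eq_norm]
    have hsplit : Fint M g x ω - Fint M g y ω
        = (max (1 - alphaM M x ω ^ 2) 0 - max (1 - alphaM M y ω ^ 2) 0)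
            * (g ω * (Real.sqrt (qf M ω))⁻¹) := by
      rw [Fint, Fint]; ring
    rw [hsplit, abs_mul]
    have e1 : |max (1 - alphaM M x ω ^ 2) 0 - max (1 - alphaM M y ω ^ 2) 0|
        ≤ 2 * (‖x - y‖ * (Real.sqrt (qf M ω))⁻¹) := by
      refine (phi_lipschitz _ _).trans ?_
      have := hαd
      linarith
    have e2 : |g ω * (Real.sqrt (qf M ω))⁻¹| ≤ B * (Real.sqrt (qf M ω))⁻¹ := by
      rw [abs_mul, abs_of_nonneg (inv_nonneg.2 hsq.le)]
      exact mul_le_mul_of_nonneg_right hgb (inv_nonneg.2 hsq.le)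
    calc |max (1 - alphaM M x ω ^ 2) 0 - max (1 - alphaM M y ω ^ 2) 0|
          * |g ω * (Real.sqrt (qf M ω))⁻¹|
        ≤ (2 * (‖x - y‖ * (Real.sqrt (qf M ω))⁻¹)) * (B * (Real.sqrt (qf M ω))⁻¹) := by
          apply mul_le_mul e1 e2 (abs_nonneg _)
          positivity
      _ = 2 * B * ((Real.sqrt (qf M ω))⁻¹ * (Real.sqrt (qf M ω))⁻¹) * ‖x - y‖ := by ring
      _ = 2 * B * (qf M ω)⁻¹ * ‖x - y‖ := by rw [hinv]
      _ ≤ ↑(Real.nnabs (2 * B / m)) * ‖x - y‖ := by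
          apply mul_le_mul_of_nonneg_right _ (norm_nonneg _)
          rw [Real.coe_nnabs, abs_of_nonneg (by positivity)]
          rw [div_eq_mul_inv]
          apply mul_le_mul_of_nonneg_left _ (by positivity)
          exact inv_anti₀ hm_pos (hq_ge ω hω)
  -- a.e. goodness
  have hgood : ∀ x₀ : E3, ∀ᵐ ω ∂μ,
      (inner ℝ x₀ ω : ℝ) ^ 2 ≠ qf M ω ∧ ω ∈ Metric.sphere (0:E3) 1 := by
    intro x₀
    have hnull : μ {ω : E3 | (inner ℝ x₀ ω : ℝ) ^ 2 = qf M ω} = 0 := by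
      rw [hμ, Measure.restrict_apply' hsph_meas]
      refine measure_mono_null ?_ (badset_null M hM x₀)
      rintro ω ⟨h1, h2⟩
      exact ⟨mem_sphere_zero_iff_norm.1 h2, h1⟩
    have h1 : ∀ᵐ ω ∂μ, (inner ℝ x₀ ω : ℝ) ^ 2 ≠ qf M ω := by
      rw [ae_iff]
      convert hnull using 2
      simp
    have h2 : ∀ᵐ ω ∂μ, ω ∈ Metric.sphere (0:E3) 1 := by
      rw [hμ]; exact ae_restrict_mem hsph_meas
    exact h1.and h2
  -- pointwise derivative
  have h_diff : ∀ x₀ : E3, ∀ᵐ ω ∂μ,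
      HasFDerivAt (fun x => Fint M g x ω) (FD M g x₀ ω) x₀ := by
    intro x₀
    filter_upwards [hgood x₀] with ω hgd
    obtain ⟨hne, hω⟩ := hgd
    have hq := hq_pos ω hω
    have hsq : 0 < Real.sqrt (qf M ω) := Real.sqrt_pos.2 hq
    have hinv : (Real.sqrt (qf M ω))⁻¹ * (Real.sqrt (qf M ω))⁻¹ = (qf M ω)⁻¹ := by
      rw [← mul_inv, Real.mul_self_sqrt hq.le]
    set t₀ : ℝ := alphaM M x₀ ω with ht₀
    have hsq_sq : Real.sqrt (qf M ω) ^ 2 = qf M ω := Real.sq_sqrt hq.le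
    have ht1 : t₀ ≠ 1 := by
      intro h
      apply hne
      have : (inner ℝ x₀ ω : ℝ) = Real.sqrt (qf M ω) := by
        have := h
        rw [ht₀, alphaM, div_eq_one_iff_eq hsq.ne'] at this
        exact this
      rw [this, hsq_sq]
    have ht2 : t₀ ≠ -1 := by
      intro h
      apply hne
      have : (inner ℝ x₀ ω : ℝ) = -Real.sqrt (qf M ω) := by
        rw [ht₀, alphaM, div_eq_iff hsq.ne'] at h
        rw [h]; ring
      rw [this]
      linear_combination hsq_sq
    have hα : HasFDerivAt (fun x => alphaM M x ω)
        ((Real.sqrt (qf M ω))⁻¹ • (innerSL ℝ ω : E3 →L[ℝ] ℝ)) x₀ := by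
      have h1 : (fun x : E3 => alphaM M x ω)
          = fun x => (Real.sqrt (qf M ω))⁻¹ • ((innerSL ℝ ω : E3 →L[ℝ] ℝ) x) := by
        funext x
        simp only [alphaM, innerSL_apply_apply, smul_eq_mul]
        rw [real_inner_comm ω x, div_eq_mul_inv]
        ring
      rw [h1]
      exact ((innerSL ℝ ω : E3 →L[ℝ] ℝ).hasFDerivAt).const_smul (Real.sqrt (qf M ω))⁻¹
    have hφd := hasDerivAt_phi ht1 ht2
    have hcomp := hφd.comp_hasFDerivAt x₀ hα
    have hmul := hcomp.mul_const (g ω * (Real.sqrt (qf M ω))⁻¹)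
    have heq : (fun x => Fint M g x ω)
        = fun x => max (1 - alphaM M x ω ^ 2) 0 * (g ω * (Real.sqrt (qf M ω))⁻¹) := by
      funext x; rw [Fint]; ring
    rw [heq]
    have hscal : FD M g x₀ ω
        = (g ω * (Real.sqrt (qf M ω))⁻¹) • (-2 * t₀ * ind1 t₀)
            • (Real.sqrt (qf M ω))⁻¹ • (innerSL ℝ ω : E3 →L[ℝ] ℝ) := by
      rw [FD, smul_smul, smul_smul]
      congr 1
      rw [coefD, ← hinv]
      ring
    rw [hscal]
    exact hmul
  -- main derivative statement
  have main : ∀ x₀ : E3, Integrable (FD M g x₀) μ ∧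
      HasFDerivAt (fun x => ∫ ω, Fint M g x ω ∂μ) (∫ ω, FD M g x₀ ω ∂μ) x₀ := by
    intro x₀
    exact hasFDerivAt_integral_of_dominated_loc_of_lip (ball_mem_nhds x₀ one_pos)
      (Filter.Eventually.of_forall hFint_meas) (hFint_int x₀) (hFD_meas x₀) (hlip x₀)
      (integrable_const _) (h_diff x₀)
  -- identify Ffun with the parametric integral
  have hFfun_eq : Ffun M g = fun x => ∫ ω, Fint M g x ω ∂μ := rfl
  have hDiff : Differentiable ℝ (Ffun M g) := by
    intro x
    rw [hFfun_eq]
    exact ((main x).2).differentiableAt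
  have hfd : ∀ x, fderiv ℝ (Ffun M g) x = ∫ ω, FD M g x ω ∂μ := by
    intro x
    rw [hFfun_eq]
    exact ((main x).2).fderiv
  -- bound for FD
  have hbd_FD : ∀ x : E3, ∀ᵐ ω ∂μ, ‖FD M g x ω‖ ≤ 2 * B * m⁻¹ := by
    intro x
    rw [hμ]
    filter_upwards [ae_restrict_mem hsph_meas] with ω hω
    have hq := hq_pos ω hω
    have hωn : ‖ω‖ = 1 := mem_sphere_zero_iff_norm.1 hω
    simp only [FD]
    refine le_trans (norm_smul_le (β := E3 →L[ℝ] ℝ) (coefD M g x ω) (innerSL ℝ ω)) ?_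
    have h1 : ‖(innerSL ℝ ω : E3 →L[ℝ] ℝ)‖ = 1 := by rw [innerSL_apply_norm, hωn]
    rw [h1, mul_one, Real.norm_eq_abs, coefD, abs_mul, abs_mul]
    have h2 := abs_mul_ind1_le (alphaM M x ω)
    have h3 : |g ω * (qf M ω)⁻¹| ≤ B * m⁻¹ := by
      rw [abs_mul, abs_of_nonneg (inv_nonneg.2 hq.le)]
      exact mul_le_mul (by simpa [Real.norm_eq_abs] using hB ω hω)
        (inv_anti₀ hm_pos (hq_ge ω hω)) (inv_nonneg.2 hq.le) hB0
    calc |(-2:ℝ)| * |alphaM M x ω * ind1 (alphaM M x ω)| * |g ω * (qf M ω)⁻¹|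
        ≤ 2 * 1 * (B * m⁻¹) := by
          apply mul_le_mul _ h3 (abs_nonneg _) (by positivity)
          apply mul_le_mul _ h2 (abs_nonneg _) (by norm_num)
          norm_num
      _ = 2 * B * m⁻¹ := by ring
  -- continuity of x ↦ ∫ FD
  have hcont_int : Continuous fun x => ∫ ω, FD M g x ω ∂μ := by
    rw [continuous_iff_continuousAt]
    intro x₀
    refine continuousAt_of_dominated (Filter.Eventually.of_forall hFD_meas)
      (Filter.Eventually.of_forall hbd_FD) (integrable_const _) ?_
    filter_upwards [hgood x₀] with ω hgd
    obtain ⟨hne, hω⟩ := hgd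
    have hq := hq_pos ω hω
    have hsq : 0 < Real.sqrt (qf M ω) := Real.sqrt_pos.2 hq
    have hsq_sq : Real.sqrt (qf M ω) ^ 2 = qf M ω := Real.sq_sqrt hq.le
    have ht1 : alphaM M x₀ ω ≠ 1 := by
      intro h
      apply hne
      rw [alphaM, div_eq_one_iff_eq hsq.ne'] at h
      rw [h, hsq_sq]
    have ht2 : alphaM M x₀ ω ≠ -1 := by
      intro h
      apply hne
      rw [alphaM, div_eq_iff hsq.ne'] at h
      rw [h]
      linear_combination hsq_sq
    have hαc : Continuous fun x : E3 => alphaM M x ω := by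
      simp only [alphaM]
      exact (Continuous.inner continuous_id continuous_const).div_const _
    have hψ := continuousAt_mul_ind1 ht1 ht2
    have hcoefc : ContinuousAt (fun x => coefD M g x ω) x₀ := by
      simp only [coefD]
      have hcomp' := ContinuousAt.comp (g := fun t : ℝ => t * ind1 t)
        (f := fun x : E3 => alphaM M x ω) (x := x₀) hψ hαc.continuousAt
      have hcomp : ContinuousAt
          (fun x : E3 => alphaM M x ω * ind1 (alphaM M x ω)) x₀ := by
        exact hcomp'
      exact (continuousAt_const.mul hcomp).mul continuousAt_const
    exact hcoefc.smul continuousAt_const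
  have hContDiff : ContDiff ℝ 1 (Ffun M g) := by
    rw [contDiff_one_iff_fderiv]
    refine ⟨hDiff, ?_⟩
    exact hcont_int.congr fun x => (hfd x).symm
  refine ⟨hContDiff, ?_⟩
  intro x j
  rw [hfd x, ContinuousLinearMap.integral_apply (main x).1]
  have hpt : ∀ ω : E3, FD M g x ω (EuclideanSpace.single j 1)
      = -2 * (alphaM M x ω *
          Set.indicator (Set.Ioo (-1 : ℝ) 1) (fun _ => (1:ℝ)) (alphaM M x ω) *
          ω j * g ω * (qf M ω)⁻¹) := by
    intro ω
    have h1 : (innerSL ℝ ω : E3 →L[ℝ] ℝ) (EuclideanSpace.single j 1) = ω j := by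
      rw [innerSL_apply_apply, EuclideanSpace.inner_single_right]
      simp
    simp only [FD]
    rw [ContinuousLinearMap.smul_apply, h1, coefD]
    have hind : ind1 (alphaM M x ω)
        = Set.indicator (Set.Ioo (-1 : ℝ) 1) (fun _ => (1:ℝ)) (alphaM M x ω) := rfl
    rw [hind]
    simp only [smul_eq_mul]
    ring
  calc ∫ ω, FD M g x ω (EuclideanSpace.single j 1) ∂μ
      = ∫ ω, -2 * (alphaM M x ω *
          Set.indicator (Set.Ioo (-1 : ℝ) 1) (fun _ => (1:ℝ)) (alphaM M x ω) *
          ω j * g ω * (qf M ω)⁻¹) ∂μ := by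
        exact integral_congr_ae (Filter.Eventually.of_forall hpt)
    _ = -2 * ∫ ω, alphaM M x ω *
          Set.indicator (Set.Ioo (-1 : ℝ) 1) (fun _ => (1:ℝ)) (alphaM M x ω) *
          ω j * g ω * (qf M ω)⁻¹ ∂μ := integral_const_mul _ _


end
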